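/- arXiv:1307.4029 — 3 statements merged into one kernel-verified Lean document; each statement's English description precedes it below -/
import Mathlib

section
/- The Graver basis of a lattice ker_Z(A) ⊆ Z^d is a finite set. -/
noncomputable section

/-- The integer kernel of the configuration `a` of `d` vectors in `ℤ^h`. -/
def kerA {d h : ℕ} (a : Fin d → Fin h → ℤ) : Set (Fin d → ℤ) :=
  {c | ∑ α, c α • a α = 0}

/-- `u` is sign-consistent with `c` if `u α * c α ≥ 0` for all `α`. -/
def SignConsistent {d : ℕ} (u c : Fin d → ℤ) : Prop := ∀ α, 0 ≤ u α * c α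

/-- A primitive element of the kernel: nonzero and not a sum of two nonzero
sign-consistent kernel elements. -/
def IsPrimitive {d h : ℕ} (a : Fin d → Fin h → ℤ) (c : Fin d → ℤ) : Prop :=
  c ∈ kerA a ∧ c ≠ 0 ∧
    ¬ ∃ u v : Fin d → ℤ, u ∈ kerA a ∧ v ∈ kerA a ∧ u ≠ 0 ∧ v ≠ 0 ∧
      SignConsistent u c ∧ SignConsistent v c ∧ c = u + v

/-- Sign decomposition map into `ℕ`-valued functions. -/
def posNeg {d : ℕ} (c : Fin d → ℤ) : Fin d × Bool → ℕ :=
  fun p => if p.2 then (c p.1).toNat else (-(c p.1)).toNat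

lemma posNeg_injective {d : ℕ} : Function.Injective (posNeg (d := d)) := by
  intro c c' hcc
  funext α
  have h1 := congrFun hcc (α, true)
  have h2 := congrFun hcc (α, false)
  simp only [posNeg] at h1 h2
  simp at h1 h2
  omega

lemma kerA_sub {d h : ℕ} {a : Fin d → Fin h → ℤ} {u v : Fin d → ℤ}
    (hu : u ∈ kerA a) (hv : v ∈ kerA a) : u - v ∈ kerA a := by
  simp only [kerA, Set.mem_setOf_eq] at *
  have : ∑ α, (u - v) α • a α = (∑ α, u α • a α) - ∑ α, v α • a α := by
    rw [← Finset.sum_sub_distrib]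
    exact Finset.sum_congr rfl fun α _ => by simp [sub_smul]
  rw [this, hu, hv, sub_zero]

lemma primitive_eq_of_le {d h : ℕ} {a : Fin d → Fin h → ℤ} {c c' : Fin d → ℤ}
    (hc : IsPrimitive a c) (hc' : IsPrimitive a c') (hle : posNeg c ≤ posNeg c') :
    c = c' := by
  by_contra hne
  obtain ⟨hker, hnz, hnot⟩ := hc
  obtain ⟨hker', hnz', hnot'⟩ := hc'
  apply hnot'
  refine ⟨c, c' - c, hker, kerA_sub hker' hker, hnz, ?_, ?_, ?_, by ring⟩
  · intro h0
    apply hne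
    have := sub_eq_zero.mp h0
    exact this.symm
  · intro α
    have h1 := hle (α, true)
    have h2 := hle (α, false)
    simp [posNeg] at h1 h2
    have : c α = 0 ∨ (0 < c α ∧ c α ≤ c' α) ∨ (c α < 0 ∧ c' α ≤ c α) := by omega
    rcases this with h | ⟨h, h'⟩ | ⟨h, h'⟩
    · simp [h]
    · exact mul_nonneg h.le (le_trans h.le h')
    · nlinarith
  · intro α
    have h1 := hle (α, true)
    have h2 := hle (α, false)
    simp [posNeg] at h1 h2
    simp only [Pi.sub_apply]
    have : c α = 0 ∨ (0 < c α ∧ c α ≤ c' α) ∨ (c α < 0 ∧ c' α ≤ c α) := by omega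
    rcases this with h | ⟨h, h'⟩ | ⟨h, h'⟩
    · have hc0 : 0 ≤ c' α ∨ c' α ≤ 0 := le_total 0 (c' α)
      rcases hc0 with h0 | h0
      · exact mul_nonneg (by simpa [h] using h0) h0
      · nlinarith [h, h0]
    · exact mul_nonneg (by linarith) (by linarith)
    · nlinarith

/-- The Graver basis (the set of primitive elements of the kernel) is finite. -/
theorem graverBasis_finite {d h : ℕ} (a : Fin d → Fin h → ℤ) :
    Set.Finite {c : Fin d → ℤ | IsPrimitive a c} := by
  set S := {c : Fin d → ℤ | IsPrimitive a c}
  have hpwo : (posNeg '' S).IsPWO :=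
    Set.isPWO_of_wellQuasiOrderedLE _
  have hanti : IsAntichain (· ≤ ·) (posNeg '' S) := by
    rintro _ ⟨c, hc, rfl⟩ _ ⟨c', hc', rfl⟩ hne hle
    exact hne (congrArg posNeg (primitive_eq_of_le hc hc' hle))
  have himg : (posNeg '' S).Finite := hanti.finite_of_partiallyWellOrderedOn hpwo
  exact himg.of_finite_image (posNeg_injective.injOn)
end
end

section
/- Let I_A be the toric ideal of A in K[x^1,…,x^d] (so d_α = 1 for all α) and let J ⊆ K[y] be any NA-homogeneous ideal. Then under the natural isomorphism ψ : K[z] → K[y], the toric fiber product satisfies I_A ×_A J = ψ^{-1}(J); i.e., I_A is a neutral element for the toric fiber product. -/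
open MvPolynomial
open scoped TensorProduct Classical

set_option maxHeartbeats 1000000
set_option synthInstance.maxHeartbeats 1000000

noncomputable section

/-- The toric ideal of a vector configuration `D : σ → V`. -/
def toricIdeal (K : Type*) [Field K] {σ V : Type*} [Fintype σ] [AddCommGroup V]
    (D : σ → V) : Ideal (MvPolynomial σ K) :=
  Ideal.span {p | ∃ u v : σ →₀ ℕ, (∑ s, ((u s : ℤ) - (v s : ℤ)) • D s) = 0 ∧
    p = monomial u 1 - monomial v 1}

/-- The homogeneous component of degree `v` of `p ∈ K[y]`, for the grading
`deg (y^α_γ) = a α`. -/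
def homCompA {K : Type*} [Field K] {d h : ℕ} (a : Fin d → Fin h → ℤ) {dy : Fin d → ℕ}
    (v : Fin h → ℤ) (p : MvPolynomial (Σ α : Fin d, Fin (dy α)) K) :
    MvPolynomial (Σ α : Fin d, Fin (dy α)) K :=
  ∑ m ∈ p.support.filter (fun m => (∑ s, (m s : ℤ) • a s.1) = v), monomial m (coeff m p)

namespace TFPaux

variable {K : Type*} [Field K] {d h : ℕ} {dy : Fin d → ℕ}

abbrev Sg (dy : Fin d → ℕ) := Σ α : Fin d, Fin (dy α)

variable (a : Fin d → Fin h → ℤ)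

/-- A-degree of a monomial exponent in `K[y]`. -/
abbrev Adeg (m : Sg dy →₀ ℕ) : Fin h → ℤ := ∑ s, (m s : ℤ) • a s.1

/-- A-degree of a monomial exponent in `K[x]`. -/
abbrev Aof (u : Fin d →₀ ℕ) : Fin h → ℤ := ∑ α, (u α : ℤ) • a α

/-- Projection of exponents: `π m (α) = ∑ γ m (α,γ)`. -/
def piMap (m : Sg dy →₀ ℕ) : Fin d →₀ ℕ := m.sum fun s e => Finsupp.single s.1 e

lemma prod_monomial {ι : Type*} (s : Finset ι) (g : ι → (Fin d →₀ ℕ)) :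
    (∏ i ∈ s, (monomial (g i) (1 : K))) = monomial (∑ i ∈ s, g i) 1 := by
  induction s using Finset.cons_induction with
  | empty => simp [monomial_zero']
  | cons i s hi ih => rw [Finset.prod_cons, Finset.sum_cons, ih, monomial_mul, mul_one]

lemma prod_single {ι G : Type*} [AddCommMonoid G] (s : Finset ι) (g : ι → G) :
    (∏ i ∈ s, (AddMonoidAlgebra.single (g i) (1 : K))) =
      AddMonoidAlgebra.single (∑ i ∈ s, g i) 1 := by
  induction s using Finset.cons_induction with
  | empty => simp [AddMonoidAlgebra.one_def]
  | cons i s hi ih =>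
      rw [Finset.prod_cons, Finset.sum_cons, ih, AddMonoidAlgebra.single_mul_single, mul_one]

lemma prod_tmul {ι A B : Type*} [CommSemiring A] [CommSemiring B] [Algebra K A] [Algebra K B]
    (s : Finset ι) (f : ι → A) (g : ι → B) :
    (∏ i ∈ s, (f i ⊗ₜ[K] g i)) = (∏ i ∈ s, f i) ⊗ₜ[K] (∏ i ∈ s, g i) := by
  induction s using Finset.cons_induction with
  | empty => simp [Algebra.TensorProduct.one_def]
  | cons i s hi ih =>
      rw [Finset.prod_cons, Finset.prod_cons, Finset.prod_cons, ih,
        Algebra.TensorProduct.tmul_mul_tmul]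

lemma Aof_eq_sum (u : Fin d →₀ ℕ) : Aof a u = u.sum fun α e => (e : ℤ) • a α := by
  rw [Finsupp.sum_fintype]
  intro α; simp

lemma Aof_piMap (m : Sg dy →₀ ℕ) : Aof a (piMap m) = Adeg a m := by
  rw [Aof_eq_sum, piMap, Finsupp.sum_sum_index]
  · rw [show (Finsupp.sum m fun s e => Finsupp.sum (Finsupp.single s.1 e)
        fun α e' => (e' : ℤ) • a α) = Finsupp.sum m fun s e => (e : ℤ) • a s.1 from
      Finsupp.sum_congr fun s _ => Finsupp.sum_single_index (by simp)]
    rw [Finsupp.sum_fintype]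
    intro s; simp
  · intro α; simp
  · intro α b₁ b₂; push_cast; rw [add_smul]

/-- The ring map `K[x] → K[ℤ^h]` sending `x_α ↦ t^{a α}`. -/
def chi : MvPolynomial (Fin d) K →ₐ[K] AddMonoidAlgebra K (Fin h → ℤ) :=
  aeval fun α => AddMonoidAlgebra.single (a α) 1

lemma chi_monomial (u : Fin d →₀ ℕ) (c : K) :
    chi a (monomial u c) = AddMonoidAlgebra.single (Aof a u) c := by
  rw [chi, aeval_monomial, Finsupp.prod]
  rw [Finset.prod_congr rfl (fun α _ => by
    rw [AddMonoidAlgebra.single_pow, one_pow])]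
  rw [prod_single]
  have hsum : (∑ α ∈ u.support, u α • a α) = Aof a u := by
    have h2 : (Aof a u : Fin h → ℤ) = ∑ α : Fin d, u α • a α :=
      Finset.sum_congr rfl fun α _ => by rw [natCast_zsmul]
    rw [h2]
    refine Finset.sum_subset (Finset.subset_univ _) ?_
    intro α _ hα
    rw [Finsupp.notMem_support_iff.1 hα, zero_smul]
  rw [hsum]
  have : (algebraMap K (AddMonoidAlgebra K (Fin h → ℤ))) c =
      AddMonoidAlgebra.single 0 c := by
    rw [AddMonoidAlgebra.coe_algebraMap]; simp
  rw [this, AddMonoidAlgebra.single_mul_single, zero_add, mul_one]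

lemma chi_ker : ∀ p ∈ toricIdeal K a, chi a p = 0 := by
  intro p hp
  have : toricIdeal K a ≤ RingHom.ker (chi a).toRingHom := by
    rw [toricIdeal, Ideal.span_le]
    rintro q ⟨u, v, huv, rfl⟩
    have hA : Aof a u = Aof a v := by
      rw [← sub_eq_zero, ← Finset.sum_sub_distrib, ← huv]
      exact Finset.sum_congr rfl fun α _ => (sub_smul _ _ _).symm
    simp only [SetLike.mem_coe, RingHom.mem_ker, AlgHom.toRingHom_eq_coe, RingHom.coe_coe,
      map_sub, chi_monomial, hA, sub_self]
  exact this hp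

/-- `chi` descends to the quotient by the toric ideal. -/
def chibar : MvPolynomial (Fin d) K ⧸ toricIdeal K a →ₐ[K] AddMonoidAlgebra K (Fin h → ℤ) :=
  Ideal.Quotient.liftₐ (toricIdeal K a) (chi a) (chi_ker a)

/-- Evaluation of a coefficient of an element of `AddMonoidAlgebra`. -/
def ev (v : Fin h → ℤ) : AddMonoidAlgebra K (Fin h → ℤ) →ₗ[K] K where
  toFun f := f.coeff v
  map_add' f g := rfl
  map_smul' c f := rfl

/-- The linear functional extracting the `v`-graded piece. -/
def Phiv (J : Ideal (MvPolynomial (Sg dy) K)) (v : Fin h → ℤ) :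
    (MvPolynomial (Fin d) K ⧸ toricIdeal K a) ⊗[K] (MvPolynomial (Sg dy) K ⧸ J) →ₗ[K]
      (MvPolynomial (Sg dy) K ⧸ J) :=
  TensorProduct.lift ((LinearMap.lsmul K _).comp ((ev v).comp (chibar a).toLinearMap))

lemma Phiv_tmul (J : Ideal (MvPolynomial (Sg dy) K)) (v : Fin h → ℤ)
    (x : MvPolynomial (Fin d) K ⧸ toricIdeal K a) (y : MvPolynomial (Sg dy) K ⧸ J) :
    Phiv a J v (x ⊗ₜ[K] y) = (chibar a x).coeff v • y := by
  simp [Phiv, ev]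
  rfl

/-- The composite map `K[z] → K[x]/I_A ⊗ K[y]/J`. -/
def Ftot (J : Ideal (MvPolynomial (Sg dy) K)) : MvPolynomial (Sg dy) K →ₐ[K]
    (MvPolynomial (Fin d) K ⧸ toricIdeal K a) ⊗[K] (MvPolynomial (Sg dy) K ⧸ J) :=
  (Algebra.TensorProduct.map
        (Ideal.Quotient.mkₐ K (toricIdeal K a)) (Ideal.Quotient.mkₐ K J)).comp
      (aeval (fun s : Sg dy =>
        (X s.1 : MvPolynomial (Fin d) K) ⊗ₜ[K] (X s : MvPolynomial (Sg dy) K)))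

lemma Ftot_monomial (J : Ideal (MvPolynomial (Sg dy) K)) (m : Sg dy →₀ ℕ) (c : K) :
    Ftot a J (monomial m c) = c •
      ((Ideal.Quotient.mkₐ K (toricIdeal K a) (monomial (piMap m) 1)) ⊗ₜ[K]
        (Ideal.Quotient.mkₐ K J (monomial m 1))) := by
  have h1 : (aeval (fun s : Sg dy =>
      (X s.1 : MvPolynomial (Fin d) K) ⊗ₜ[K] (X s : MvPolynomial (Sg dy) K)))
        (monomial m c) = c • ((monomial (piMap m) 1 : MvPolynomial (Fin d) K) ⊗ₜ[K]
          (monomial m 1 : MvPolynomial (Sg dy) K)) := by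
    rw [aeval_monomial, Finsupp.prod]
    rw [Finset.prod_congr rfl (fun s _ => Algebra.TensorProduct.tmul_pow _ _ _)]
    rw [prod_tmul]
    rw [Finset.prod_congr rfl (fun s (_ : s ∈ m.support) =>
      (X_pow_eq_monomial : (X s.1 : MvPolynomial (Fin d) K) ^ (m s) = _))]
    rw [prod_monomial]
    rw [show (∑ s ∈ m.support, Finsupp.single s.1 (m s)) = piMap m from rfl]
    rw [show (∏ s ∈ m.support, (X s : MvPolynomial (Sg dy) K) ^ (m s)) = monomial m 1 from
      prod_X_pow_eq_monomial]
    rw [TensorProduct.smul_tmul', Algebra.TensorProduct.algebraMap_apply,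
      Algebra.TensorProduct.tmul_mul_tmul, one_mul, ← Algebra.smul_def]
  rw [Ftot, AlgHom.comp_apply, h1, map_smul, Algebra.TensorProduct.map_tmul]

lemma chibar_mk (q : MvPolynomial (Fin d) K) :
    chibar a (Ideal.Quotient.mkₐ K (toricIdeal K a) q) = chi a q := by
  simp [chibar, Ideal.Quotient.mkₐ_eq_mk, Ideal.Quotient.liftₐ_apply, Ideal.Quotient.lift_mk]
  rfl

lemma Phiv_Ftot_monomial (J : Ideal (MvPolynomial (Sg dy) K)) (v : Fin h → ℤ)
    (m : Sg dy →₀ ℕ) (c : K) :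
    Phiv a J v (Ftot a J (monomial m c)) =
      if Adeg a m = v then Ideal.Quotient.mkₐ K J (monomial m c) else 0 := by
  rw [Ftot_monomial, map_smul, Phiv_tmul, chibar_mk, chi_monomial, Aof_piMap]
  rw [show ((AddMonoidAlgebra.single (Adeg a m) (1 : K)).coeff v)
      = if Adeg a m = v then (1 : K) else 0 from Finsupp.single_apply]
  split_ifs with hh
  · rw [one_smul, ← map_smul, smul_monomial, smul_eq_mul, mul_one]
  · simp

lemma Phiv_Ftot (J : Ideal (MvPolynomial (Sg dy) K)) (v : Fin h → ℤ)
    (p : MvPolynomial (Sg dy) K) :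
    Phiv a J v (Ftot a J p) = Ideal.Quotient.mkₐ K J (homCompA a v p) := by
  have h1 : Ftot a J p = ∑ m ∈ p.support, Ftot a J (monomial m (coeff m p)) := by
    rw [← map_sum, support_sum_monomial_coeff]
  rw [h1, map_sum, Finset.sum_congr rfl (fun m _ => Phiv_Ftot_monomial a J v m (coeff m p))]
  rw [homCompA, map_sum, Finset.sum_filter]

lemma sum_homCompA (p : MvPolynomial (Sg dy) K) :
    ∑ v ∈ p.support.image (Adeg a), homCompA a v p = p := by
  unfold homCompA
  rw [Finset.sum_fiberwise_of_maps_to (fun m hm => Finset.mem_image_of_mem _ hm)]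
  exact support_sum_monomial_coeff p

lemma support_homCompA (v : Fin h → ℤ) (p : MvPolynomial (Sg dy) K) :
    ∀ m ∈ (homCompA a v p).support, Adeg a m = v := by
  intro m hm
  have := MvPolynomial.support_sum hm
  obtain ⟨m', hm', hmm⟩ := Finset.mem_biUnion.1 this
  have : m ∈ ({m'} : Finset _) := Finset.mem_of_subset (support_monomial_subset) hmm
  rw [Finset.mem_singleton] at this
  subst this
  exact (Finset.mem_filter.1 hm').2

lemma Ftot_homog (J : Ideal (MvPolynomial (Sg dy) K)) (v : Fin h → ℤ)
    (q : MvPolynomial (Sg dy) K) (hq : q ∈ J) (hsupp : ∀ m ∈ q.support, Adeg a m = v) :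
    Ftot a J q = 0 := by
  by_cases h0 : q = 0
  · rw [h0, map_zero]
  obtain ⟨m₀, hm₀⟩ := Finset.nonempty_iff_ne_empty.2 (fun hc => h0 (support_eq_empty.1 hc))
  have hrep : ∀ m ∈ q.support, Ftot a J (monomial m (coeff m q)) =
      (Ideal.Quotient.mkₐ K (toricIdeal K a) (monomial (piMap m₀) 1)) ⊗ₜ[K]
        (coeff m q • Ideal.Quotient.mkₐ K J (monomial m 1)) := by
    intro m hm
    have hmk : Ideal.Quotient.mkₐ K (toricIdeal K a) (monomial (piMap m) 1) =
        Ideal.Quotient.mkₐ K (toricIdeal K a) (monomial (piMap m₀) 1) := by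
      simp only [Ideal.Quotient.mkₐ_eq_mk]
      rw [Ideal.Quotient.eq]
      apply Ideal.subset_span
      refine ⟨piMap m, piMap m₀, ?_, rfl⟩
      have : (∑ α, (((piMap m) α : ℤ) - ((piMap m₀) α : ℤ)) • a α)
          = Aof a (piMap m) - Aof a (piMap m₀) := by
        rw [← Finset.sum_sub_distrib]
        exact Finset.sum_congr rfl fun α _ => sub_smul _ _ _
      rw [this, Aof_piMap, Aof_piMap, hsupp m hm, hsupp m₀ hm₀, sub_self]
    rw [Ftot_monomial, hmk, TensorProduct.tmul_smul]
  have h1 : Ftot a J q = ∑ m ∈ q.support, Ftot a J (monomial m (coeff m q)) := by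
    rw [← map_sum, support_sum_monomial_coeff]
  rw [h1, Finset.sum_congr rfl hrep, ← TensorProduct.tmul_sum]
  have h2 : (∑ m ∈ q.support, coeff m q • Ideal.Quotient.mkₐ K J (monomial m 1)) = 0 := by
    rw [Finset.sum_congr rfl (fun m _ => by
      rw [← map_smul, smul_monomial, smul_eq_mul, mul_one])]
    rw [← map_sum, support_sum_monomial_coeff, Ideal.Quotient.mkₐ_eq_mk,
      Ideal.Quotient.eq_zero_iff_mem]
    exact hq
  rw [h2, TensorProduct.tmul_zero]

end TFPaux

/-- The toric ideal `I_A` is a neutral element for the toric fiber product: for any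
`ℕ𝒜`-homogeneous ideal `J ⊆ K[y]`, under the natural identification `ψ : K[z] ≅ K[y]`
(here `K[z] = K[y]` literally, `z^α_γ = y^α_γ`), one has `I_A ×_A J = ψ⁻¹(J) = J`. -/
theorem toricIdeal_neutral_for_tfp (K : Type*) [Field K] {d h : ℕ}
    (a : Fin d → Fin h → ℤ) (dy : Fin d → ℕ)
    (J : Ideal (MvPolynomial (Σ α : Fin d, Fin (dy α)) K))
    (hJ : ∀ p ∈ J, ∀ v : Fin h → ℤ, homCompA a v p ∈ J) :
    RingHom.ker (((Algebra.TensorProduct.map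
        (Ideal.Quotient.mkₐ K (toricIdeal K a)) (Ideal.Quotient.mkₐ K J)).comp
      (aeval (fun s : Σ α : Fin d, Fin (dy α) =>
        (X s.1 : MvPolynomial (Fin d) K) ⊗ₜ[K]
          (X s : MvPolynomial (Σ α : Fin d, Fin (dy α)) K)))).toRingHom) = J := by
  ext p
  rw [RingHom.mem_ker]
  show TFPaux.Ftot a J p = 0 ↔ p ∈ J
  constructor
  · intro hp
    have hcomp : ∀ v, homCompA a v p ∈ J := by
      intro v
      have h := TFPaux.Phiv_Ftot a J v p
      rw [hp, map_zero] at h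
      rw [Ideal.Quotient.mkₐ_eq_mk] at h
      exact (Ideal.Quotient.eq_zero_iff_mem).1 h.symm
    rw [← TFPaux.sum_homCompA a p]
    exact Ideal.sum_mem _ fun v _ => hcomp v
  · intro hp
    rw [show p = ∑ v ∈ p.support.image (TFPaux.Adeg a), homCompA a v p from
      (TFPaux.sum_homCompA a p).symm, map_sum]
    refine Finset.sum_eq_zero fun v _ => ?_
    exact TFPaux.Ftot_homog a J v _ (hJ _ hp v) (TFPaux.support_homCompA a v p)
end
end

section
/- The Segre product of two affine monoid rings over a field K is again an affine monoid ring. -/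
open scoped TensorProduct

noncomputable section

open Function

section helpers
open Function

/-- Dickson's lemma application: the kernel of a monoid hom from `ι → ℕ` is a
finitely generated submonoid. -/
lemma fg_mker_pi {ι : Type*} [Fintype ι] {C : Type*} [AddCommMonoid C]
    (ψ : (ι → ℕ) →+ C) : (AddMonoidHom.mker ψ).FG := by
  classical
  have hpwo : ∀ s : Set (ι → ℕ), s.IsPWO := fun s =>
    (Set.IsPWO.pi (s := fun _ => (Set.univ : Set ℕ))
      (fun _ => Set.isPWO_of_wellQuasiOrderedLE _)).mono (fun x _ => by simp)
  set S : Set (ι → ℕ) := {a | ψ a = 0 ∧ a ≠ 0 ∧ ∀ b, ψ b = 0 → b ≠ 0 → ¬ b < a} with hSdef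
  have hanti : IsAntichain (· ≤ ·) S := by
    intro a ha b hb hne hle
    exact hb.2.2 a ha.1 ha.2.1 (lt_of_le_of_ne hle hne)
  have hfin : S.Finite := hanti.finite_of_partiallyWellOrderedOn (hpwo S)
  rw [AddSubmonoid.fg_iff]
  refine ⟨S, le_antisymm ?_ ?_, hfin⟩
  · rw [AddSubmonoid.closure_le]
    intro a ha
    exact AddMonoidHom.mem_mker.2 ha.1
  · intro s hs
    rw [AddMonoidHom.mem_mker] at hs
    suffices H : ∀ n (s : ι → ℕ), ψ s = 0 → (∑ i, s i) = n →
        s ∈ AddSubmonoid.closure S from H _ s hs rfl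
    intro n
    induction n using Nat.strong_induction_on with
    | _ n ih =>
      intro s hψ hsum
      by_cases h0 : s = 0
      · subst h0; exact zero_mem _
      · set T : Set (ι → ℕ) := {a | ψ a = 0 ∧ a ≠ 0 ∧ a ≤ s} with hTdef
        have hTwf : T.IsWF := (hpwo T).isWF
        have hTne : T.Nonempty := ⟨s, hψ, h0, le_refl s⟩
        set m := hTwf.min hTne with hm
        obtain ⟨hmk, hm0, hms⟩ := hTwf.min_mem hTne
        have hmS : m ∈ S := by
          refine ⟨hmk, hm0, fun b hb hb0 hlt => ?_⟩
          exact hTwf.not_lt_min hTne ⟨hb, hb0, le_trans hlt.le hms⟩ hlt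
        have hsplit : s = m + (s - m) := by
          funext i; exact (Nat.add_sub_cancel' (hms i)).symm
        have hψ2 : ψ (s - m) = 0 := by
          have h2 : ψ m + ψ (s - m) = 0 := by rw [← map_add, ← hsplit, hψ]
          rwa [hmk, zero_add] at h2
        have hsum2 : (∑ i, (s - m) i) < n := by
          have hs' : (∑ i, m i) + (∑ i, (s - m) i) = n := by
            rw [← Finset.sum_add_distrib, ← hsum]
            exact Finset.sum_congr rfl fun i _ => by
              conv_rhs => rw [hsplit]
              rfl
          have hpos : 0 < ∑ i, m i := by
            rcases Function.ne_iff.1 hm0 with ⟨i, hi⟩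
            exact Finset.sum_pos' (fun _ _ => Nat.zero_le _)
              ⟨i, Finset.mem_univ i, Nat.pos_of_ne_zero hi⟩
          omega
        have h1 : s - m ∈ AddSubmonoid.closure S := ih _ hsum2 _ hψ2 rfl
        have h2 : m ∈ AddSubmonoid.closure S := AddSubmonoid.subset_closure hmS
        rw [hsplit]
        exact add_mem h2 h1

/-- Image of the kernel under a surjection. -/
lemma mker_map_of_surjective {A B C : Type*} [AddCommMonoid A] [AddCommMonoid B]
    [AddCommMonoid C] (f : A →+ B) (hf : Surjective f) (ψ : B →+ C) :
    (AddMonoidHom.mker (ψ.comp f)).map f = AddMonoidHom.mker ψ := by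
  ext b
  constructor
  · rintro ⟨a, ha, rfl⟩
    exact ha
  · intro hb
    obtain ⟨a, rfl⟩ := hf b
    exact ⟨a, hb, rfl⟩

/-- A finitely generated submonoid admits a surjection from some `ℕ^k`. -/
lemma exists_fin_surjective {α : Type*} [AddCommMonoid α] {N : AddSubmonoid α} (hN : N.FG) :
    ∃ (k : ℕ) (σ : (Fin k → ℕ) →+ N), Surjective σ := by
  classical
  obtain ⟨Sf, hSf⟩ := hN
  have hmem : ∀ x ∈ Sf, x ∈ N := fun x hx => by
    rw [← hSf]; exact AddSubmonoid.subset_closure hx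
  set g : Fin Sf.card → N := fun i =>
    ⟨(Sf.equivFin.symm i : α), hmem _ (Sf.equivFin.symm i).2⟩ with hg
  refine ⟨Sf.card,
    { toFun := fun a => ∑ i, a i • g i
      map_zero' := by simp
      map_add' := by intro a b; simp [add_smul, Finset.sum_add_distrib] }, ?_⟩
  intro x
  have hx : (x : α) ∈ AddSubmonoid.closure (Sf : Set α) := by rw [hSf]; exact x.2
  have key : ∀ y ∈ AddSubmonoid.closure (Sf : Set α),
      ∃ a : Fin Sf.card → ℕ, ((∑ i : Fin Sf.card, a i • g i : N) : α) = y := by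
    intro y hy
    induction hy using AddSubmonoid.closure_induction with
    | mem z hz =>
      refine ⟨Pi.single (Sf.equivFin ⟨z, hz⟩) 1, ?_⟩
      have : ∑ i, (Pi.single (Sf.equivFin ⟨z, hz⟩) 1 : Fin Sf.card → ℕ) i • g i
          = g (Sf.equivFin ⟨z, hz⟩) := by
        rw [Finset.sum_eq_single (Sf.equivFin ⟨z, hz⟩)]
        · simp
        · intro b _ hb; simp [Pi.single_apply, hb]
        · intro hb; exact absurd (Finset.mem_univ _) hb
      rw [this, hg]
      simp
    | zero => exact ⟨0, by simp⟩
    | add u v hu hv ihu ihv =>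
      obtain ⟨a, ha⟩ := ihu
      obtain ⟨b, hb⟩ := ihv
      refine ⟨a + b, ?_⟩
      have : (∑ i, (a + b) i • g i : N) = (∑ i, a i • g i) + ∑ i, b i • g i := by
        simp [add_smul, Finset.sum_add_distrib]
      rw [this, AddSubmonoid.coe_add, ha, hb]
  obtain ⟨a, ha⟩ := key x hx
  exact ⟨a, Subtype.ext ha⟩


/-- A linear map sending a basis to a linearly independent family is injective. -/
lemma injective_of_linearIndependent_comp_basis {R M N ι : Type*} [CommRing R]
    [AddCommGroup M] [AddCommGroup N] [Module R M] [Module R N]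
    (b : Module.Basis ι R M) (f : M →ₗ[R] N)
    (hli : LinearIndependent R (⇑f ∘ ⇑b)) : Function.Injective f := by
  rw [← LinearMap.ker_eq_bot, eq_bot_iff]
  intro x hx
  rw [LinearMap.mem_ker] at hx
  have h1 : f (Finsupp.linearCombination R ⇑b (b.repr x))
      = Finsupp.linearCombination R (⇑f ∘ ⇑b) (b.repr x) :=
    Finsupp.apply_linearCombination R f ⇑b (b.repr x)
  rw [b.linearCombination_repr] at h1
  have h0 : b.repr x = 0 := linearIndependent_iff.mp hli _ (by rw [← h1, hx])
  have hx0 : x = 0 := by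
    have h2 := b.linearCombination_repr x
    rw [h0, map_zero] at h2
    exact h2.symm
  simp [hx0]

end helpers

set_option maxHeartbeats 1000000
set_option synthInstance.maxHeartbeats 200000

/-- The Segre product of two affine monoid rings `K[L]` and `K[L']` (graded via monoid
homomorphisms `p : L → ℤ^h`, `p' : L' → ℤ^h` landing in a common affine monoid) is
again an affine monoid ring. -/
theorem segre_of_affine_monoid_rings (K : Type*) [Field K] {m1 m2 h : ℕ}
    (L : AddSubmonoid (Fin m1 → ℤ)) (L' : AddSubmonoid (Fin m2 → ℤ))
    (hL : L.FG) (hL' : L'.FG)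
    (p : L →+ (Fin h → ℤ)) (p' : L' →+ (Fin h → ℤ)) :
    ∃ T : Subalgebra K (AddMonoidAlgebra K L ⊗[K] AddMonoidAlgebra K L'),
      Subalgebra.toSubmodule T =
        (⨆ v : Fin h → ℤ, Submodule.span K
          {x : AddMonoidAlgebra K L ⊗[K] AddMonoidAlgebra K L' |
            ∃ r ∈ Submodule.span K
                {y : AddMonoidAlgebra K L | ∃ l : L, p l = v ∧
                  y = AddMonoidAlgebra.single l (1 : K)},
              ∃ s ∈ Submodule.span K
                {y : AddMonoidAlgebra K L' | ∃ l' : L', p' l' = v ∧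
                  y = AddMonoidAlgebra.single l' (1 : K)},
                x = r ⊗ₜ[K] s}) ∧
      ∃ (m : ℕ) (M : AddSubmonoid (Fin m → ℤ)), M.FG ∧
        Nonempty (T ≃ₐ[K] AddMonoidAlgebra K M) := by
  classical
  -- the grading-compatibility homomorphism
  set φ : (↥L × ↥L') →+ (Fin h → ℤ) :=
    (p.comp (AddMonoidHom.fst ↥L ↥L')) - (p'.comp (AddMonoidHom.snd ↥L ↥L')) with hφdef
  set M0 : AddSubmonoid (↥L × ↥L') := AddMonoidHom.mker φ with hM0def
  have hmemM0 : ∀ z : ↥L × ↥L', z ∈ M0 ↔ p z.1 = p' z.2 := by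
    intro z
    rw [hM0def, AddMonoidHom.mem_mker, hφdef]
    rw [AddMonoidHom.sub_apply, sub_eq_zero]
    rfl
  -- `M0` is finitely generated
  obtain ⟨k1, σ1, hσ1⟩ := exists_fin_surjective hL
  obtain ⟨k2, σ2, hσ2⟩ := exists_fin_surjective hL'
  set ρ : ((Fin k1 ⊕ Fin k2) → ℕ) →+ ((Fin k1 → ℕ) × (Fin k2 → ℕ)) :=
    { toFun := fun a => (a ∘ Sum.inl, a ∘ Sum.inr)
      map_zero' := rfl
      map_add' := fun _ _ => rfl } with hρdef
  have hρ : Surjective ρ := fun bc => ⟨Sum.elim bc.1 bc.2, rfl⟩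
  set σ : ((Fin k1 ⊕ Fin k2) → ℕ) →+ (↥L × ↥L') := (σ1.prodMap σ2).comp ρ with hσdef
  have hσ : Surjective σ := by
    rw [hσdef]
    rw [AddMonoidHom.coe_comp]
    apply Surjective.comp
    · rw [AddMonoidHom.coe_prodMap]
      exact hσ1.prodMap hσ2
    · exact hρ
  have hM0fg : M0.FG := by
    rw [hM0def, ← mker_map_of_surjective σ hσ φ]
    exact (fg_mker_pi (φ.comp σ)).map σ
  -- embed `M0` into `ℤ^(m1+m2)`
  set e : (↥L × ↥L') →+ (Fin (m1 + m2) → ℤ) :=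
    { toFun := fun z => Fin.append (z.1 : Fin m1 → ℤ) (z.2 : Fin m2 → ℤ)
      map_zero' := by
        funext i
        cases i using Fin.addCases with
        | left i => simp [Fin.append_left]
        | right i => simp [Fin.append_right]
      map_add' := by
        intro a b
        funext i
        cases i using Fin.addCases with
        | left i => simp [Fin.append_left]
        | right i => simp [Fin.append_right] } with hedef
  have he_apply : ∀ z : ↥L × ↥L',
      e z = Fin.append (z.1 : Fin m1 → ℤ) (z.2 : Fin m2 → ℤ) := fun _ => rfl
  have he : Injective e := by
    intro z w hzw
    have h1 : (z.1 : Fin m1 → ℤ) = (w.1 : Fin m1 → ℤ) := by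
      funext i
      have hc := congrFun hzw (Fin.castAdd m2 i)
      rwa [he_apply, he_apply, Fin.append_left, Fin.append_left] at hc
    have h2 : (z.2 : Fin m2 → ℤ) = (w.2 : Fin m2 → ℤ) := by
      funext i
      have hc := congrFun hzw (Fin.natAdd m1 i)
      rwa [he_apply, he_apply, Fin.append_right, Fin.append_right] at hc
    exact Prod.ext (Subtype.ext h1) (Subtype.ext h2)
  set M : AddSubmonoid (Fin (m1 + m2) → ℤ) := M0.map e with hMdef
  have hMfg : M.FG := hM0fg.map e
  set eqvM : ↥M0 ≃+ ↥M := AddSubmonoid.equivMapOfInjective M0 e he with heqvMdef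
  -- the Segre algebra map
  set F : Multiplicative ↥M0 →* (AddMonoidAlgebra K ↥L ⊗[K] AddMonoidAlgebra K ↥L') :=
    { toFun := fun m =>
        AddMonoidAlgebra.single (((Multiplicative.toAdd m : ↥M0) : ↥L × ↥L').1) (1 : K) ⊗ₜ[K]
        AddMonoidAlgebra.single (((Multiplicative.toAdd m : ↥M0) : ↥L × ↥L').2) (1 : K)
      map_one' := by
        rw [Algebra.TensorProduct.one_def]
        congr 1 <;>
          simp [AddMonoidAlgebra.one_def]
      map_mul' := by
        intro a b
        rw [Algebra.TensorProduct.tmul_mul_tmul]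
        simp [AddMonoidAlgebra.single_mul_single] } with hFdef
  set Φ : AddMonoidAlgebra K ↥M0 →ₐ[K]
      (AddMonoidAlgebra K ↥L ⊗[K] AddMonoidAlgebra K ↥L') :=
    (AddMonoidAlgebra.lift K _ ↥M0) F with hΦdef
  have hΦsingle : ∀ (m : ↥M0) (c : K),
      Φ (AddMonoidAlgebra.single m c) =
        c • (AddMonoidAlgebra.single ((m : ↥L × ↥L').1) (1 : K) ⊗ₜ[K]
          AddMonoidAlgebra.single ((m : ↥L × ↥L').2) (1 : K)) := by
    intro m c
    rw [hΦdef, AddMonoidAlgebra.lift_single]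
    rfl
  -- injectivity of `Φ`
  have hinj : Injective Φ := by
    let b0 : Module.Basis ↥M0 K (AddMonoidAlgebra K ↥M0) := AddMonoidAlgebra.basis ↥M0 K
    let b1 : Module.Basis ↥L K (AddMonoidAlgebra K ↥L) := AddMonoidAlgebra.basis ↥L K
    let b2 : Module.Basis ↥L' K (AddMonoidAlgebra K ↥L') := AddMonoidAlgebra.basis ↥L' K
    have hfun : (⇑Φ.toLinearMap ∘ ⇑b0)
        = ⇑(b1.tensorProduct b2) ∘ (fun m : ↥M0 => ((m : ↥L × ↥L').1, (m : ↥L × ↥L').2)) := by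
      funext m
      have hb0 : b0 m = AddMonoidAlgebra.single m (1 : K) := by
        simp [b0, Finsupp.coe_basisSingleOne]
      simp only [Function.comp_apply, AlgHom.toLinearMap_apply, hb0, hΦsingle, one_smul]
      rw [Module.Basis.tensorProduct_apply]
      rfl
    apply injective_of_linearIndependent_comp_basis b0 Φ.toLinearMap
    rw [hfun]
    apply LinearIndependent.comp (b1.tensorProduct b2).linearIndependent
    intro x y hxy
    apply Subtype.ext
    exact Prod.ext (congrArg Prod.fst hxy) (congrArg Prod.snd hxy)
  refine ⟨Φ.range, ?_, m1 + m2, M, hMfg,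
    ⟨(AlgEquiv.ofInjective Φ hinj).symm.trans (AddMonoidAlgebra.domCongr K K eqvM)⟩⟩
  -- the submodule identity
  apply le_antisymm
  · intro x hx
    rw [Subalgebra.mem_toSubmodule] at hx
    obtain ⟨y, rfl⟩ := (AlgHom.mem_range Φ).1 hx
    clear hx
    induction y using AddMonoidAlgebra.induction_linear with
    | zero => simp only [map_zero]; exact zero_mem _
    | add f g hf hg => simp only [map_add]; exact add_mem hf hg
    | single m c =>
      rw [hΦsingle]
      apply Submodule.smul_mem
      apply Submodule.mem_iSup_of_mem (p (m : ↥L × ↥L').1)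
      apply Submodule.subset_span
      refine ⟨AddMonoidAlgebra.single ((m : ↥L × ↥L').1) (1 : K),
        Submodule.subset_span ⟨(m : ↥L × ↥L').1, rfl, rfl⟩,
        AddMonoidAlgebra.single ((m : ↥L × ↥L').2) (1 : K),
        Submodule.subset_span ⟨(m : ↥L × ↥L').2, ((hmemM0 _).1 m.2).symm, rfl⟩, rfl⟩
  · refine iSup_le fun v => Submodule.span_le.mpr ?_
    rintro x ⟨r, hr, s, hs, rfl⟩
    rw [SetLike.mem_coe, Subalgebra.mem_toSubmodule]
    have key : ∀ r ∈ Submodule.span K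
        {y : AddMonoidAlgebra K L | ∃ l : L, p l = v ∧
          y = AddMonoidAlgebra.single l (1 : K)},
        ∀ s ∈ Submodule.span K
          {y : AddMonoidAlgebra K L' | ∃ l' : L', p' l' = v ∧
            y = AddMonoidAlgebra.single l' (1 : K)},
        r ⊗ₜ[K] s ∈ Φ.range := by
      intro r hr
      induction hr using Submodule.span_induction with
      | mem r hrmem =>
        intro s hs
        induction hs using Submodule.span_induction with
        | mem s hsmem =>
          obtain ⟨l, hl, rfl⟩ := hrmem
          obtain ⟨l', hl', rfl⟩ := hsmem
          refine (AlgHom.mem_range Φ).2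
            ⟨AddMonoidAlgebra.single
              (⟨(l, l'), (hmemM0 (l, l')).2 (by rw [hl, hl'])⟩ : ↥M0) (1 : K), ?_⟩
          rw [hΦsingle, one_smul]
        | zero => rw [TensorProduct.tmul_zero]; exact zero_mem _
        | add x y hx hy ihx ihy => rw [TensorProduct.tmul_add]; exact add_mem ihx ihy
        | smul a x hx ihx =>
          rw [TensorProduct.tmul_smul]
          exact Subalgebra.smul_mem _ ihx a
      | zero => intro s _; rw [TensorProduct.zero_tmul]; exact zero_mem _
      | add x y hx hy ihx ihy =>
        intro s hs
        rw [TensorProduct.add_tmul]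
        exact add_mem (ihx s hs) (ihy s hs)
      | smul a x hx ihx =>
        intro s hs
        rw [← TensorProduct.smul_tmul']
        exact Subalgebra.smul_mem _ (ihx s hs) a
    exact key r hr s hs
end
end
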